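/- Let K be a finite simplicial complex such that there exists a continuous injective map f: |K'| → ℝ^d. Then f is faithful. If moreover f is affine on each simplex, then K is d-representable. -/
import Mathlib


open scoped BigOperators

noncomputable section

variable {V : Type*} [Fintype V] [DecidableEq V]

def IsComplex (K : Finset (Finset V)) : Prop :=
  ∅ ∈ K ∧ (∀ v : V, {v} ∈ K) ∧ ∀ F ∈ K, ∀ G ⊆ F, G ∈ K

def facets (K : Finset (Finset V)) : Finset (Finset V) :=
  K.filter fun J => ∀ J' ∈ K, J ⊆ J' → J = J'

def contV (K : Finset (Finset V)) (i : V) : Finset (Finset V) :=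
  (facets K).filter fun J => i ∈ J

def dual (K : Finset (Finset V)) : Finset (Finset (Finset V)) :=
  (facets K).powerset.filter fun α => (α.inf id).Nonempty

def geomFace {W : Type*} [Fintype W] (F : Finset W) : Set (W → ℝ) :=
  {x | (∀ w, 0 ≤ x w) ∧ (∑ w, x w) = 1 ∧ ∀ w, x w ≠ 0 → w ∈ F}

def geom {W : Type*} [Fintype W] (L : Finset (Finset W)) : Set (W → ℝ) :=
  ⋃ F ∈ L, geomFace F

def supp {W : Type*} [Fintype W] [DecidableEq W] (x : W → ℝ) : Finset W :=
  Finset.univ.filter fun w => x w ≠ 0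

def Faithful {d : ℕ} (K : Finset (Finset V))
    (f : (Finset V → ℝ) → EuclideanSpace ℝ (Fin d)) : Prop :=
  ∀ I : Finset V, (⋂ i ∈ I, f '' geomFace (contV K i)).Nonempty → I ∈ K

def affExt {W : Type*} [Fintype W] {E : Type*} [AddCommGroup E] [Module ℝ E]
    (p : W → E) (x : W → ℝ) : E := ∑ w, x w • p w

def Hhat (K : Finset (Finset V)) : Set ((Finset V → ℝ) × (Finset V → ℝ)) :=
  {z | z.1 ∈ geom (dual K) ∧ z.2 ∈ geom (dual K) ∧
    ((supp z.1).inf id ∪ (supp z.2).inf id) ∉ K}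

def Matousek (d : ℕ) (K : Finset (Finset V)) : Prop :=
  ∃ g : Hhat K → EuclideanSpace ℝ (Fin d),
    Continuous g ∧ (∀ z, ‖g z‖ = 1) ∧
    ∀ (x y : Finset V → ℝ) (hxy : (x, y) ∈ Hhat K) (hyx : (y, x) ∈ Hhat K),
      g ⟨(y, x), hyx⟩ = - g ⟨(x, y), hxy⟩

def Representable (d : ℕ) (K : Finset (Finset V)) : Prop :=
  ∃ C : V → Set (EuclideanSpace ℝ (Fin d)),
    (∀ i, Convex ℝ (C i)) ∧ ∀ I : Finset V, I ∈ K ↔ (⋂ i ∈ I, C i).Nonempty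

def dimOf {W : Type*} [Fintype W] [DecidableEq W] (L : Finset (Finset W)) : ℕ :=
  (L.sup Finset.card) - 1

lemma contV_mem_dual (K : Finset (Finset V)) (i : V) : contV K i ∈ dual K := by
  rw [dual, Finset.mem_filter, Finset.mem_powerset]
  refine ⟨Finset.filter_subset _ _, ⟨i, ?_⟩⟩
  have : ({i} : Finset V) ≤ (contV K i).inf id := by
    refine Finset.le_inf fun J hJ => ?_
    rw [contV, Finset.mem_filter] at hJ
    simpa using hJ.2
  exact Finset.singleton_subset_iff.mp this

lemma geomFace_subset_geom (K : Finset (Finset V)) (i : V) :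
    geomFace (contV K i) ⊆ geom (dual K) := by
  intro x hx
  exact Set.mem_biUnion (contV_mem_dual K i) hx

lemma exists_facet (K : Finset (Finset V)) {F : Finset V} (hF : F ∈ K) :
    ∃ J ∈ facets K, F ⊆ J := by
  classical
  obtain ⟨J, hJ, hmax⟩ := (K.filter fun G => F ⊆ G).exists_max_image Finset.card
    ⟨F, by simp [hF]⟩
  rw [Finset.mem_filter] at hJ
  refine ⟨J, ?_, hJ.2⟩
  rw [facets, Finset.mem_filter]
  refine ⟨hJ.1, fun J' hJ' hsub => ?_⟩
  have hJ'mem : J' ∈ K.filter fun G => F ⊆ G := by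
    simp [hJ', hJ.2.trans hsub]
  exact Finset.eq_of_subset_of_card_le hsub (hmax J' hJ'mem)

lemma convex_geomFace {W : Type*} [Fintype W] (F : Finset W) :
    Convex ℝ (geomFace F) := by
  intro x hx y hy a b ha hb hab
  refine ⟨fun w => ?_, ?_, fun w hw => ?_⟩
  · have := hx.1 w; have := hy.1 w
    simp only [Pi.add_apply, Pi.smul_apply, smul_eq_mul]
    positivity
  · simp only [Pi.add_apply, Pi.smul_apply, smul_eq_mul]
    rw [Finset.sum_add_distrib, ← Finset.mul_sum, ← Finset.mul_sum, hx.2.1, hy.2.1]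
    simpa using hab
  · by_contra hwF
    have hx0 : x w = 0 := by
      by_contra h; exact hwF (hx.2.2 w h)
    have hy0 : y w = 0 := by
      by_contra h; exact hwF (hy.2.2 w h)
    apply hw
    simp [hx0, hy0]

lemma stmt11_faithful {d : ℕ} (K : Finset (Finset V)) (hK : IsComplex K)
    (f : (Finset V → ℝ) → EuclideanSpace ℝ (Fin d))
    (hinj : Set.InjOn f (geom (dual K))) : Faithful K f := by
  intro I hI
  rcases I.eq_empty_or_nonempty with rfl | ⟨i₀, hi₀⟩
  · exact hK.1
  obtain ⟨y, hy⟩ := hI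
  rw [Set.mem_iInter₂] at hy
  obtain ⟨x, hx, hfx⟩ := hy i₀ hi₀
  have hxall : ∀ i ∈ I, x ∈ geomFace (contV K i) := by
    intro i hi
    obtain ⟨x', hx', hfx'⟩ := hy i hi
    have : x' = x := hinj (geomFace_subset_geom K i hx')
      (geomFace_subset_geom K i₀ hx) (hfx'.trans hfx.symm)
    rwa [← this]
  have hxne : ∃ J : Finset V, x J ≠ 0 := by
    by_contra h
    push_neg at h
    have := hx.2.1
    rw [Finset.sum_eq_zero fun J _ => h J] at this
    exact one_ne_zero this.symm
  obtain ⟨J, hJ⟩ := hxne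
  have hJfacet : J ∈ facets K := by
    have := (hxall i₀ hi₀).2.2 J hJ
    rw [contV, Finset.mem_filter] at this
    exact this.1
  have hIJ : I ⊆ J := by
    intro i hi
    have := (hxall i hi).2.2 J hJ
    rw [contV, Finset.mem_filter] at this
    exact this.2
  have hJK : J ∈ K := by
    rw [facets, Finset.mem_filter] at hJfacet
    exact hJfacet.1
  exact hK.2.2 J hJK I hIJ

/-- a continuous injective map `|K'| → ℝ^d` is faithful; if it is
moreover affine, then `K` is `d`-representable. -/
theorem stmt11 {d : ℕ} (K : Finset (Finset V)) (hK : IsComplex K)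
    (f : (Finset V → ℝ) → EuclideanSpace ℝ (Fin d))
    (hcont : ContinuousOn f (geom (dual K)))
    (hinj : Set.InjOn f (geom (dual K))) :
    Faithful K f ∧
    ∀ p : Finset V → EuclideanSpace ℝ (Fin d),
      (∀ x ∈ geom (dual K), f x = affExt p x) → Representable d K := by
  have hfaith := stmt11_faithful K hK f hinj
  refine ⟨hfaith, fun p hp => ?_⟩
  refine ⟨fun i => f '' geomFace (contV K i), fun i => ?_, fun I => ⟨fun hI => ?_, hfaith I⟩⟩
  · -- convexity
    show Convex ℝ (f '' geomFace (contV K i))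
    have himg : f '' geomFace (contV K i) = affExt p '' geomFace (contV K i) :=
      Set.image_congr fun x hx => hp x (geomFace_subset_geom K i hx)
    rw [himg]
    let L : (Finset V → ℝ) →ₗ[ℝ] EuclideanSpace ℝ (Fin d) :=
      { toFun := affExt p
        map_add' := fun x y => by
          simp [affExt, add_smul, Finset.sum_add_distrib]
        map_smul' := fun c x => by
          simp [affExt, smul_smul, Finset.smul_sum] }
    exact (convex_geomFace (contV K i)).linear_image L
  · -- membership: I ∈ K → intersection nonempty
    obtain ⟨J, hJfacet, hIJ⟩ := exists_facet K hI
    set x : Finset V → ℝ := fun G => if G = J then (1 : ℝ) else 0 with hxdef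
    have hxmem : ∀ i ∈ I, x ∈ geomFace (contV K i) := by
      intro i hi
      refine ⟨fun w => by positivity, by simp [hxdef], fun w hw => ?_⟩
      have hwJ : w = J := by
        by_contra h
        simp [hxdef, h] at hw
      rw [hwJ, contV, Finset.mem_filter]
      exact ⟨hJfacet, hIJ hi⟩
    exact ⟨f x, Set.mem_iInter₂.2 fun i hi => ⟨x, hxmem i hi, rfl⟩⟩
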